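/- Fix a real number a > 1. The function b ↦ f(a,b) is strictly increasing on [a, ∞), i.e., for all real b, b' with a ≤ b < b' one has f(a,b) < f(a,b'), where f(a,b) = ∫_{1}^{a} (2z−a+b)/√((z²−1)(a−z)(b+z)) dz. -/

import Mathlib

open MeasureTheory intervalIntegral Real Filter Topology

/-- `f(a,b) = ∫₁ᵃ (2z−a+b)/√((z²−1)(a−z)(b+z)) dz`. -/
noncomputable def f (a b : ℝ) : ℝ :=
  ∫ z in (1:ℝ)..a, (2 * z - a + b) / Real.sqrt ((z ^ 2 - 1) * (a - z) * (b + z))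

/-- `g(a,b) = ∫₁ᵇ (2z+a−b)/√((z²−1)(a+z)(b−z)) dz`. -/
noncomputable def g (a b : ℝ) : ℝ :=
  ∫ z in (1:ℝ)..b, (2 * z + a - b) / Real.sqrt ((z ^ 2 - 1) * (a + z) * (b - z))

lemma ptwise (a b b' z : ℝ) (hb : a ≤ b) (hbb : b < b') (hz1 : 1 < z) (hza : z < a) :
    (2 * z - a + b) / Real.sqrt ((z ^ 2 - 1) * (a - z) * (b + z)) <
      (2 * z - a + b') / Real.sqrt ((z ^ 2 - 1) * (a - z) * (b' + z)) := by
  have ha : 1 < a := hz1.trans hza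
  have hC : 0 < (z ^ 2 - 1) * (a - z) := mul_pos (by nlinarith) (by linarith)
  have hbz : 0 < b + z := by linarith
  have hbz' : 0 < b' + z := by linarith
  have hN : 0 < 2 * z - a + b := by linarith
  have hN' : 0 < 2 * z - a + b' := by linarith
  rw [Real.sqrt_mul hC.le, Real.sqrt_mul hC.le]
  have hsC : 0 < Real.sqrt ((z ^ 2 - 1) * (a - z)) := Real.sqrt_pos.2 hC
  rw [mul_comm (Real.sqrt ((z ^ 2 - 1) * (a - z))) (Real.sqrt (b + z)), ← div_div,
    mul_comm (Real.sqrt ((z ^ 2 - 1) * (a - z))) (Real.sqrt (b' + z)), ← div_div]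
  apply div_lt_div_of_pos_right ?_ hsC
  rw [div_lt_div_iff₀ (Real.sqrt_pos.2 hbz) (Real.sqrt_pos.2 hbz')]
  have h1 : 0 ≤ (2 * z - a + b') * Real.sqrt (b + z) :=
    mul_nonneg hN'.le (Real.sqrt_nonneg _)
  refine lt_of_pow_lt_pow_left₀ 2 h1 ?_
  rw [mul_pow, mul_pow, Real.sq_sqrt hbz.le, Real.sq_sqrt hbz'.le]
  have hbb'2 : a * a ≤ b * b' := by nlinarith
  nlinarith [mul_pos (sub_pos.2 hbb) (show (0:ℝ) < b * b' + z * (b + b') + 2 * a * z - a ^ 2 by nlinarith)]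

lemma integrable_aux (a b : ℝ) (ha : 1 < a) (hb : 0 < b) :
    IntervalIntegrable
      (fun z : ℝ => (2 * z - a + b) / Real.sqrt ((z ^ 2 - 1) * (a - z) * (b + z)))
      volume 1 a := by
  set m : ℝ := (1 + a) / 2 with hm
  have h1m : 1 < m := by rw [hm]; linarith
  have hma : m < a := by rw [hm]; linarith
  set M : ℝ := 3 * a + b with hM
  have hM0 : 0 < M := by positivity
  have hmeas : ∀ u v : ℝ, AEStronglyMeasurable
      (fun z : ℝ => (2 * z - a + b) / Real.sqrt ((z ^ 2 - 1) * (a - z) * (b + z)))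
      (volume.restrict (Set.uIoc u v)) := by
    intro u v; apply Measurable.aestronglyMeasurable; fun_prop
  have hNbd : ∀ z ∈ Set.Ioc (1:ℝ) a, |2 * z - a + b| ≤ M := by
    intro z hz
    rw [abs_le]
    constructor <;> [nlinarith [hz.1, hz.2]; nlinarith [hz.1, hz.2]]
  apply IntervalIntegrable.trans (b := m)
  · -- on [1, m]
    set q0 : ℝ := (a - 1) * (b + 1) with hq0
    have hq0pos : 0 < q0 := mul_pos (by linarith) (by linarith)
    set C0 : ℝ := M / Real.sqrt q0 with hC0
    have hbound : IntervalIntegrable (fun x : ℝ => C0 * (x - 1) ^ (-(1/2) : ℝ)) volume 1 m := by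
      have h := (intervalIntegral.intervalIntegrable_rpow' (a := 0) (b := m - 1)
        (show (-1:ℝ) < -(1/2) by norm_num)).comp_sub_right 1
      simpa using h.const_mul C0
    apply hbound.mono_fun' (hmeas 1 m)
    rw [Filter.EventuallyLE, ae_restrict_iff' measurableSet_uIoc]
    filter_upwards with z hz
    rw [Set.uIoc_of_le h1m.le] at hz
    obtain ⟨hz1, hzm⟩ := hz
    -- bound
    have hza : z < a := lt_of_le_of_lt hzm hma
    have hQ : (a - 1) * (b + 1) ≤ (z + 1) * (a - z) * (b + z) := by
      have e12 : a - 1 ≤ (z + 1) * (a - z) := by nlinarith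
      have e3 : b + 1 ≤ b + z := by linarith
      calc (a-1) * (b+1) ≤ ((z+1)*(a-z)) * (b+1) :=
            mul_le_mul_of_nonneg_right e12 (by linarith)
        _ ≤ (z+1)*(a-z)*(b+z) := mul_le_mul_of_nonneg_left e3 (by nlinarith)
    have hP : (z ^ 2 - 1) * (a - z) * (b + z) = (z - 1) * ((z + 1) * (a - z) * (b + z)) := by
      ring
    rw [norm_div, hP, Real.sqrt_mul (by linarith : (0:ℝ) ≤ z - 1)]
    have hrpow : (z - 1) ^ (-(1/2) : ℝ) = (Real.sqrt (z - 1))⁻¹ := by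
      rw [Real.rpow_neg (by linarith), ← Real.sqrt_eq_rpow]
    rw [hrpow]
    have hsz : 0 < Real.sqrt (z - 1) := Real.sqrt_pos.2 (by linarith)
    have hsq0 : 0 < Real.sqrt q0 := Real.sqrt_pos.2 hq0pos
    have hsQ : Real.sqrt q0 ≤ Real.sqrt ((z + 1) * (a - z) * (b + z)) := Real.sqrt_le_sqrt hQ
    have key : ‖2 * z - a + b‖ / ‖Real.sqrt (z - 1) * Real.sqrt ((z+1)*(a-z)*(b+z))‖
        ≤ M / (Real.sqrt (z - 1) * Real.sqrt q0) := by
      rw [Real.norm_eq_abs, Real.norm_eq_abs,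
        abs_of_nonneg (mul_nonneg (Real.sqrt_nonneg _) (Real.sqrt_nonneg _))]
      apply div_le_div₀ hM0.le (hNbd z ⟨hz1, hza.le⟩) (by positivity)
      exact mul_le_mul_of_nonneg_left hsQ hsz.le
    refine key.trans (le_of_eq ?_)
    rw [hC0, div_mul_eq_div_div_swap, div_eq_mul_inv]
  · -- on [m, a]
    set q1 : ℝ := (m ^ 2 - 1) * (b + 1) with hq1
    have hq1pos : 0 < q1 := mul_pos (by nlinarith) (by linarith)
    set C1 : ℝ := M / Real.sqrt q1 with hC1
    have hbound : IntervalIntegrable (fun x : ℝ => C1 * (a - x) ^ (-(1/2) : ℝ)) volume m a := by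
      have h := (intervalIntegral.intervalIntegrable_rpow' (a := a - m) (b := 0)
        (show (-1:ℝ) < -(1/2) by norm_num)).comp_sub_left a
      simpa using h.const_mul C1
    apply hbound.mono_fun' (hmeas m a)
    rw [Filter.EventuallyLE, ae_restrict_iff' measurableSet_uIoc]
    filter_upwards with z hz
    rw [Set.uIoc_of_le hma.le] at hz
    obtain ⟨hzm, hza⟩ := hz
    have hz1 : 1 < z := h1m.trans hzm
    rcases hza.eq_or_lt with rfl | hza'
    · -- z = a : both sides fine
      have : (z ^ 2 - 1) * (z - z) * (b + z) = 0 := by ring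
      rw [this, Real.sqrt_zero, div_zero, norm_zero, sub_self,
        Real.zero_rpow (by norm_num : (-(1/2) : ℝ) ≠ 0), mul_zero]
    · have hQ : q1 ≤ (z ^ 2 - 1) * (b + z) := by
        rw [hq1]
        have e12 : m ^ 2 - 1 ≤ z ^ 2 - 1 := by nlinarith
        have e3 : b + 1 ≤ b + z := by linarith
        calc (m^2-1)*(b+1) ≤ (z^2-1)*(b+1) := mul_le_mul_of_nonneg_right e12 (by linarith)
          _ ≤ (z^2-1)*(b+z) := mul_le_mul_of_nonneg_left e3 (by nlinarith)
      have hP : (z ^ 2 - 1) * (a - z) * (b + z) = (a - z) * ((z ^ 2 - 1) * (b + z)) := by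
        ring
      rw [norm_div, hP, Real.sqrt_mul (by linarith : (0:ℝ) ≤ a - z)]
      have hrpow : (a - z) ^ (-(1/2) : ℝ) = (Real.sqrt (a - z))⁻¹ := by
        rw [Real.rpow_neg (by linarith), ← Real.sqrt_eq_rpow]
      rw [hrpow]
      have hsz : 0 < Real.sqrt (a - z) := Real.sqrt_pos.2 (by linarith)
      have hsq1 : 0 < Real.sqrt q1 := Real.sqrt_pos.2 hq1pos
      have hsQ : Real.sqrt q1 ≤ Real.sqrt ((z ^ 2 - 1) * (b + z)) := Real.sqrt_le_sqrt hQ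
      have key : ‖2 * z - a + b‖ / ‖Real.sqrt (a - z) * Real.sqrt ((z^2-1)*(b+z))‖
          ≤ M / (Real.sqrt (a - z) * Real.sqrt q1) := by
        rw [Real.norm_eq_abs, Real.norm_eq_abs,
          abs_of_nonneg (mul_nonneg (Real.sqrt_nonneg _) (Real.sqrt_nonneg _))]
        apply div_le_div₀ hM0.le (hNbd z ⟨hz1, hza⟩) (by positivity)
        exact mul_le_mul_of_nonneg_left hsQ hsz.le
      refine key.trans (le_of_eq ?_)
      rw [hC1, div_mul_eq_div_div_swap, div_eq_mul_inv]

/-- For fixed `a > 1`, `b ↦ f(a,b)` is strictly increasing on `[a, ∞)`. -/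
theorem stmt10 (a : ℝ) (ha : 1 < a) :
    ∀ b b' : ℝ, a ≤ b → b < b' → f a b < f a b' := by
  intro b b' hb hbb
  have hb0 : 0 < b := by linarith
  have hb'0 : 0 < b' := by linarith
  unfold f
  apply intervalIntegral.integral_lt_integral_of_ae_le_of_measure_setOf_lt_ne_zero
    (by linarith : (1:ℝ) ≤ a) (integrable_aux a b ha hb0) (integrable_aux a b' ha hb'0)
  · rw [Filter.EventuallyLE, ae_restrict_iff' measurableSet_Ioc]
    filter_upwards with z hz
    obtain ⟨hz1, hza⟩ := hz
    rcases hza.eq_or_lt with rfl | hza'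
    · have e1 : (z ^ 2 - 1) * (z - z) * (b + z) = 0 := by ring
      have e2 : (z ^ 2 - 1) * (z - z) * (b' + z) = 0 := by ring
      rw [e1, e2, Real.sqrt_zero, div_zero, div_zero]
    · exact (ptwise a b b' z hb hbb hz1 hza').le
  · intro hcontra
    have hsub : Set.Ioo (1:ℝ) a ⊆ {x | (2 * x - a + b) / Real.sqrt ((x ^ 2 - 1) * (a - x) * (b + x)) <
        (2 * x - a + b') / Real.sqrt ((x ^ 2 - 1) * (a - x) * (b' + x))} :=
      fun z hz => ptwise a b b' z hb hbb hz.1 hz.2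
    have h1 : volume.restrict (Set.Ioc (1:ℝ) a) (Set.Ioo (1:ℝ) a) = 0 :=
      le_antisymm (le_trans (measure_mono hsub) hcontra.le) zero_le
    rw [Measure.restrict_apply measurableSet_Ioo, Set.inter_eq_self_of_subset_left
      Set.Ioo_subset_Ioc_self, Real.volume_Ioo] at h1
    have := ENNReal.ofReal_pos.2 (show (0:ℝ) < a - 1 by linarith)
    exact this.ne' h1
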